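/- Let B be a symmetric linear map on ℝ^{n+1} with an orthonormal eigenbasis e_i, Be_i = μ_i e_i, and suppose there is a function f : S^n → ℝ such that for all i ≠ j, μ_j³ − μ_i³ − 3μ_i(μ_j² − μ_i²) = (μ_j − μ_i)·f(e_i). If B has three pairwise distinct eigenvalues μ_i, μ_j, μ_k, then a contradiction follows; hence B has at most two distinct eigenvalues. -/
import Mathlib


/-- If real numbers `μ i` (the eigenvalues of `B`) admit a function `f` such that
`μ j ³ - μ i ³ - 3 μ i (μ j ² - μ i ²) = (μ j - μ i) * f i` for all `i ≠ j`, then the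
`μ i` take at most two distinct values. -/
theorem stmt_6 {n : ℕ} (μ : Fin (n + 1) → ℝ) (f : Fin (n + 1) → ℝ)
    (h : ∀ i j, i ≠ j →
      μ j ^ 3 - μ i ^ 3 - 3 * μ i * (μ j ^ 2 - μ i ^ 2) = (μ j - μ i) * f i) :
    (Set.range μ).ncard ≤ 2 := by
  have key : ∀ i j, μ i ≠ μ j → f i = μ j ^ 2 - 2 * μ i * μ j - 2 * μ i ^ 2 := by
    intro i j hne
    have hij : i ≠ j := fun e => hne (by rw [e])
    have h1 := h i j hij
    have h2 : μ j - μ i ≠ 0 := sub_ne_zero.mpr (Ne.symm hne)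
    apply mul_left_cancel₀ h2
    rw [← h1]; ring
  by_contra hc
  push_neg at hc
  rw [Set.two_lt_ncard] at hc
  obtain ⟨a, ⟨i, ha⟩, b, ⟨j, hb⟩, c, ⟨k, hk⟩, hab, hac, hbc⟩ := hc
  subst ha hb hk
  have e1 := key i j hab
  have e2 := key i k hac
  have e3 := key j i (Ne.symm hab)
  have e4 := key j k hbc
  have hbc2 : μ j + μ k = 2 * μ i := by
    have hne : μ j - μ k ≠ 0 := sub_ne_zero.mpr hbc
    apply mul_left_cancel₀ hne
    linear_combination e2 - e1
  have hac2 : μ i + μ k = 2 * μ j := by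
    have hne : μ i - μ k ≠ 0 := sub_ne_zero.mpr hac
    apply mul_left_cancel₀ hne
    linear_combination e4 - e3
  have : μ i = μ j := by linarith
  exact hab this
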